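/- In a locally transitive tournament all local orders induce one common cyclic order: if r is a locally transitive tournament on a finite set V with |V| = N ≥ 1, then there exists a bijection φ : V → ℤ/Nℤ such that for all u ∈ V and all w ≠ u, r(u,w) holds if and only if the representative of φ(w) − φ(u) in {1,…,N−1} is at most the out-degree |Out(u)| of u; equivalently, the out-neighborhood of each vertex consists exactly of its |Out(u)| immediate cyclic successors. -/
import Mathlib

/-- `r` is a tournament on `V`: an irreflexive relation such that for all distinct
`u, w` exactly one of `r u w` and `r w u` holds. -/
def IsTournament {V : Type*} (r : V → V → Prop) : Prop :=
  (∀ v, ¬ r v v) ∧ ∀ u w, u ≠ w → (r u w ↔ ¬ r w u)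

/-- A tournament is locally transitive if for every vertex `v` the restriction of `r`
to the in-neighborhood `In(v) = {u : r u v}` and to the out-neighborhood
`Out(v) = {u : r v u}` are both transitive. -/
def IsLocallyTransitive {V : Type*} (r : V → V → Prop) : Prop :=
  ∀ v, (∀ a b c, r a v → r b v → r c v → r a b → r b c → r a c) ∧
       (∀ a b c, r v a → r v b → r v c → r a b → r b c → r a c)

namespace LTAux

attribute [local instance] Classical.propDecidable

open Finset Function

variable {V : Type*} [Fintype V] [Nonempty V] {r : V → V → Prop}

lemma asymm (htour : IsTournament r) {u w : V} (h : r u w) : ¬ r w u := by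
  by_cases he : u = w
  · subst he; exact absurd h (htour.1 u)
  · exact fun h2 => ((htour.2 w u (Ne.symm he)).mp h2) h

lemma total (htour : IsTournament r) {u w : V} (h : u ≠ w) (h2 : ¬ r w u) : r u w :=
  (htour.2 u w h).mpr h2

lemma ne_of_r (htour : IsTournament r) {u w : V} (h : r u w) : u ≠ w :=
  fun he => htour.1 u (he ▸ h)

/-- the "maximum" of a finset w.r.t. `r`, chosen as a score maximizer. -/
noncomputable def maxIn (r : V → V → Prop) (S : Finset V) : V :=
  if h : S.Nonempty then
    (Finset.exists_max_image S (fun m => (S.filter (fun x => r m x)).card) h).choose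
  else Classical.arbitrary V

lemma maxIn_spec {S : Finset V} (h : S.Nonempty) :
    maxIn r S ∈ S ∧ ∀ x ∈ S,
      (S.filter (fun y => r x y)).card ≤ (S.filter (fun y => r (maxIn r S) y)).card := by
  rw [maxIn, dif_pos h]
  obtain ⟨h1, h2⟩ :=
    (Finset.exists_max_image S (fun m => (S.filter (fun x => r m x)).card) h).choose_spec
  exact ⟨h1, h2⟩

lemma maxIn_beats (htour : IsTournament r) {S : Finset V} (hS : S.Nonempty)
    (htr : ∀ a b c, a ∈ S → b ∈ S → c ∈ S → r a b → r b c → r a c) :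
    maxIn r S ∈ S ∧ ∀ x ∈ S, x ≠ maxIn r S → r (maxIn r S) x := by
  obtain ⟨hm, hmax⟩ := maxIn_spec (r := r) hS
  set m := maxIn r S with hmdef
  refine ⟨hm, fun x hx hne => ?_⟩
  by_contra hc
  have hxm : r x m := total htour hne hc
  have hsub : S.filter (fun y => r m y) ⊂ S.filter (fun y => r x y) := by
    constructor
    · intro y hy
      simp only [mem_filter] at hy ⊢
      exact ⟨hy.1, htr x m y hx hm hy.1 hxm hy.2⟩
    · intro hsub2
      have h1 : m ∈ S.filter (fun y => r x y) := by
        simp only [mem_filter]; exact ⟨hm, hxm⟩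
      have h2 : m ∉ S.filter (fun y => r m y) := by
        simp only [mem_filter]; exact fun h => htour.1 m h.2
      exact h2 (hsub2 h1)
  have := Finset.card_lt_card hsub
  have := hmax x hx
  omega

/-- out-neighborhood as a finset -/
noncomputable def outS (r : V → V → Prop) (u : V) : Finset V :=
  Finset.univ.filter (fun x => r u x)

/-- in-neighborhood as a finset -/
noncomputable def inS (r : V → V → Prop) (u : V) : Finset V :=
  Finset.univ.filter (fun x => r x u)

lemma mem_outS {u x : V} : x ∈ outS r u ↔ r u x := by simp [outS]

lemma mem_inS {u x : V} : x ∈ inS r u ↔ r x u := by simp [inS]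

/-- successor: top of out-neighborhood if nonempty, else top of in-neighborhood -/
noncomputable def succ (r : V → V → Prop) (u : V) : V :=
  if (outS r u).Nonempty then maxIn r (outS r u) else maxIn r (inS r u)

lemma succ_out (htour : IsTournament r) (hloc : IsLocallyTransitive r) {u : V}
    (h : (outS r u).Nonempty) :
    succ r u ∈ outS r u ∧ ∀ x ∈ outS r u, x ≠ succ r u → r (succ r u) x := by
  rw [succ, if_pos h]
  exact maxIn_beats htour h (fun a b c ha hb hc =>
    (hloc u).2 a b c (mem_outS.mp ha) (mem_outS.mp hb) (mem_outS.mp hc))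

lemma succ_in (htour : IsTournament r) (hloc : IsLocallyTransitive r) {u : V}
    (h : ¬ (outS r u).Nonempty) (h2 : (inS r u).Nonempty) :
    succ r u ∈ inS r u ∧ ∀ x ∈ inS r u, x ≠ succ r u → r (succ r u) x := by
  rw [succ, if_neg h]
  exact maxIn_beats htour h2 (fun a b c ha hb hc =>
    (hloc u).1 a b c (mem_inS.mp ha) (mem_inS.mp hb) (mem_inS.mp hc))

/-- the four point argument -/
lemma key4 (htour : IsTournament r) (hloc : IsLocallyTransitive r) {u x m z : V}
    (hux : r u x) (hum : r u m) (hxm : r x m) (hxz : r x z) (hzu : r z u)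
    (hzm : r z m) : False :=
  asymm htour hxz ((hloc m).1 z u x hzm hum hxm hzu hux)

/-- main induction: the k-th iterate of succ is in `Out u` and beats exactly
`card - k` elements of `Out u`, for `1 ≤ k ≤ card (Out u)`. -/
lemma iterate_mem (htour : IsTournament r) (hloc : IsLocallyTransitive r) (u : V) :
    ∀ k, 1 ≤ k → k ≤ (outS r u).card →
      (succ r)^[k] u ∈ outS r u ∧
      ((outS r u).filter (fun z => r ((succ r)^[k] u) z)).card = (outS r u).card - k := by
  intro k
  induction k with
  | zero => omega
  | succ k ih =>
    intro _ hk1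
    by_cases hk0 : k = 0
    · subst hk0
      -- base case: k+1 = 1
      have hne : (outS r u).Nonempty := by
        rw [← Finset.card_pos]; omega
      obtain ⟨hmem, hbeats⟩ := succ_out htour hloc hne
      simp only [zero_add, Function.iterate_one]
      refine ⟨hmem, ?_⟩
      have : (outS r u).filter (fun z => r (succ r u) z) = (outS r u).erase (succ r u) := by
        ext z
        simp only [mem_filter, mem_erase]
        constructor
        · rintro ⟨hz, hr⟩
          exact ⟨fun he => htour.1 (succ r u) (he ▸ hr), hz⟩
        · rintro ⟨hne2, hz⟩
          exact ⟨hz, hbeats z hz hne2⟩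
      rw [this, Finset.card_erase_of_mem hmem]
    · -- inductive step
      have hk : 1 ≤ k := by omega
      obtain ⟨hxmem, hcard⟩ := ih hk (by omega)
      set x := (succ r)^[k] u with hxdef
      set L := (outS r u).filter (fun z => r x z) with hLdef
      have hLne : L.Nonempty := by
        rw [← Finset.card_pos, hcard]; omega
      have hLsub : ∀ z ∈ L, z ∈ outS r x := by
        intro z hz
        rw [hLdef, mem_filter] at hz
        exact mem_outS.mpr hz.2
      have hOxne : (outS r x).Nonempty := hLne.imp (fun z hz => hLsub z hz)
      obtain ⟨hsmem, hsbeats⟩ := succ_out htour hloc hOxne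
      -- m : max of L
      have hLtr : ∀ a b c, a ∈ L → b ∈ L → c ∈ L → r a b → r b c → r a c := by
        intro a b c ha hb hc
        rw [hLdef, mem_filter] at ha hb hc
        exact (hloc u).2 a b c (mem_outS.mp ha.1) (mem_outS.mp hb.1) (mem_outS.mp hc.1)
      obtain ⟨hmL, hmbeats⟩ := maxIn_beats htour hLne hLtr
      set m := maxIn r L with hmdef
      have hmOx : m ∈ outS r x := hLsub m hmL
      have hux : r u x := mem_outS.mp hxmem
      have hum : r u m := by
        have := hmL; rw [hLdef, mem_filter] at this; exact mem_outS.mp this.1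
      have hxm : r x m := mem_outS.mp hmOx
      -- m beats everything else in outS r x
      have hmtop : ∀ z ∈ outS r x, z ≠ m → r m z := by
        intro z hz hne2
        have hxz : r x z := mem_outS.mp hz
        by_cases hzO : z ∈ outS r u
        · exact hmbeats z (by rw [hLdef, mem_filter]; exact ⟨hzO, hxz⟩) hne2
        · have hzu0 : z ≠ u := fun he => (asymm htour hux) (he ▸ hxz)
          have hzu : r z u := total htour hzu0 (fun h => hzO (mem_outS.mpr h))
          by_contra hc
          have hzm : r z m := total htour hne2 hc
          exact key4 htour hloc hux hum hxm hxz hzu hzm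
      -- succ x = m
      have hse : succ r x = m := by
        by_contra hne2
        have h1 : r (succ r x) m := hsbeats m hmOx (Ne.symm hne2)
        have h2 : r m (succ r x) := hmtop (succ r x) hsmem hne2
        exact asymm htour h1 h2
      have hiter : (succ r)^[k+1] u = m := by
        rw [Function.iterate_succ_apply', ← hxdef, hse]
      rw [hiter]
      constructor
      · have := hmL; rw [hLdef, mem_filter] at this; exact this.1
      · have hfil : (outS r u).filter (fun z => r m z) = L.erase m := by
          ext z
          simp only [mem_erase, hLdef, mem_filter]
          constructor
          · rintro ⟨hz, hmz⟩
            refine ⟨fun he => htour.1 m (he ▸ hmz), hz, ?_⟩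
            -- r x z from r x m, r m z by transitivity at u
            exact (hloc u).2 x m z (mem_outS.mp hxmem) hum (mem_outS.mp hz) hxm hmz
          · rintro ⟨hne2, hz, hxz⟩
            exact ⟨hz, hmbeats z (by rw [hLdef, mem_filter]; exact ⟨hz, hxz⟩) hne2⟩
        rw [hfil, Finset.card_erase_of_mem hmL, hcard]
        omega

/-- distinct iterates: characterization of the out-neighborhood -/
lemma out_iff_iterate (htour : IsTournament r) (hloc : IsLocallyTransitive r) (u w : V) :
    r u w ↔ ∃ k, 1 ≤ k ∧ k ≤ (outS r u).card ∧ (succ r)^[k] u = w := by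
  constructor
  · intro h
    have hw : w ∈ outS r u := mem_outS.mpr h
    set d := (outS r u).card with hd
    have hd1 : 1 ≤ d := Finset.card_pos.mpr ⟨w, hw⟩
    have hinj : ∀ a ∈ Finset.Icc 1 d, ∀ b ∈ Finset.Icc 1 d,
        (succ r)^[a] u = (succ r)^[b] u → a = b := by
      intro a ha b hb he
      rw [Finset.mem_Icc] at ha hb
      have h1 := (iterate_mem htour hloc u a ha.1 ha.2).2
      have h2 := (iterate_mem htour hloc u b hb.1 hb.2).2
      rw [he] at h1
      omega
    have himg : (Finset.Icc 1 d).image (fun k => (succ r)^[k] u) = outS r u := by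
      apply Finset.eq_of_subset_of_card_le
      · intro z hz
        rw [Finset.mem_image] at hz
        obtain ⟨k, hk, hkz⟩ := hz
        rw [Finset.mem_Icc] at hk
        exact hkz ▸ (iterate_mem htour hloc u k hk.1 hk.2).1
      · rw [Finset.card_image_of_injOn hinj, Nat.card_Icc]
        omega
    have : w ∈ (Finset.Icc 1 d).image (fun k => (succ r)^[k] u) := himg ▸ hw
    rw [Finset.mem_image] at this
    obtain ⟨k, hk, hkw⟩ := this
    rw [Finset.mem_Icc] at hk
    exact ⟨k, hk.1, hk.2, hkw⟩
  · rintro ⟨k, hk1, hkd, rfl⟩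
    exact mem_outS.mp (iterate_mem htour hloc u k hk1 hkd).1

lemma succ_injective (htour : IsTournament r) (hloc : IsLocallyTransitive r) :
    Function.Injective (succ r) := by
  have key : ∀ a b : V, r a b → succ r a = succ r b → False := by
    intro a b hab he
    have hOa : (outS r a).Nonempty := ⟨b, mem_outS.mpr hab⟩
    obtain ⟨hsa, hsabeats⟩ := succ_out htour hloc hOa
    have hras : r a (succ r a) := mem_outS.mp hsa
    by_cases hsb : succ r a = b
    · -- succ b = b impossible
      rw [he] at hsb
      by_cases hOb : (outS r b).Nonempty
      · have h1 := (succ_out htour hloc hOb).1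
        rw [hsb] at h1
        exact htour.1 b (mem_outS.mp h1)
      · have hIb : (inS r b).Nonempty := ⟨a, mem_inS.mpr hab⟩
        have h1 := (succ_in htour hloc hOb hIb).1
        rw [hsb] at h1
        exact htour.1 b (mem_inS.mp h1)
    · have hsb2 : r (succ r a) b := hsabeats b (mem_outS.mpr hab) (Ne.symm hsb)
      by_cases hOb : (outS r b).Nonempty
      · have : r b (succ r b) := mem_outS.mp (succ_out htour hloc hOb).1
        rw [← he] at this
        exact asymm htour hsb2 this
      · have hIb : (inS r b).Nonempty := ⟨a, mem_inS.mpr hab⟩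
        obtain ⟨hsbI, hsbbeats⟩ := succ_in htour hloc hOb hIb
        have haI : a ∈ inS r b := mem_inS.mpr hab
        have hne : a ≠ succ r b := by
          rw [← he]; exact ne_of_r htour hras
        have : r (succ r b) a := hsbbeats a haI hne
        rw [← he] at this
        exact asymm htour hras this
  intro a b he
  by_contra hne
  rcases total htour hne (fun h => (key b a h (he.symm))) with h
  exact key a b h he

lemma exists_period (htour : IsTournament r) (hloc : IsLocallyTransitive r) (x : V) :
    ∃ m, 1 ≤ m ∧ (succ r)^[m] x = x := by
  have hinj := succ_injective htour hloc
  have key : ∀ s t : ℕ, s < t → (succ r)^[s] x = (succ r)^[t] x →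
      ∃ m, 1 ≤ m ∧ (succ r)^[m] x = x := by
    intro s t hst he
    have h2 : (succ r)^[s] ((succ r)^[t - s] x) = (succ r)^[s] x := by
      rw [← Function.iterate_add_apply]
      have h3 : s + (t - s) = t := by omega
      rw [h3, he]
    exact ⟨t - s, by omega, (hinj.iterate s) h2⟩
  obtain ⟨a, b, hab, he⟩ := Fintype.exists_ne_map_eq_of_card_lt
    (fun k : Fin (Fintype.card V + 1) => (succ r)^[k.1] x) (by simp)
  rcases lt_trichotomy a.1 b.1 with h | h | h
  · exact key a.1 b.1 h he
  · exact absurd (Fin.ext h) hab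
  · exact key b.1 a.1 h he.symm

end LTAux

open LTAux in
theorem locallyTransitive_common_cyclic_order {V : Type*} [Fintype V]
    (r : V → V → Prop) (htour : IsTournament r) (hloc : IsLocallyTransitive r)
    (N : ℕ) (hN : Nat.card V = N) (hN1 : 1 ≤ N) :
    ∃ φ : V ≃ ZMod N, ∀ u w : V, w ≠ u →
      (r u w ↔ (φ w - φ u).val ≤ Nat.card {x : V // r u x}) := by
  classical
  haveI : NeZero N := ⟨by omega⟩
  haveI : Nonempty V := by
    rw [← Fintype.card_pos_iff, ← Nat.card_eq_fintype_card]; omega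
  set f := succ r with hf
  have v0 : V := Classical.arbitrary V
  -- minimal period of v0
  have hper := exists_period htour hloc v0
  set p := Nat.find hper with hp
  obtain ⟨hp1, hpfix⟩ : 1 ≤ p ∧ f^[p] v0 = v0 := Nat.find_spec hper
  have hpmin : ∀ m, 1 ≤ m → m < p → f^[m] v0 ≠ v0 := by
    intro m hm1 hmp hc
    exact Nat.find_min hper hmp ⟨hm1, hc⟩
  -- periodicity
  have hmod : ∀ a, f^[a] v0 = f^[a % p] v0 := by
    intro a
    conv_lhs => rw [← Nat.div_add_mod a p, Nat.add_comm]
    rw [Function.iterate_add_apply, Function.iterate_mul, Function.iterate_fixed hpfix]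
  -- injectivity below p
  have hinj := succ_injective htour hloc
  have hcancel : ∀ a b : ℕ, a < b → b < p → f^[a] v0 = f^[b] v0 → False := by
    intro a b hab hbp he
    have h2 : f^[a] (f^[b - a] v0) = f^[a] v0 := by
      rw [← Function.iterate_add_apply]
      have h3 : a + (b - a) = b := by omega
      rw [h3, ← he]
    exact hpmin (b - a) (by omega) (by omega) ((hinj.iterate a) h2)
  have hinjlt : ∀ a < p, ∀ b < p, f^[a] v0 = f^[b] v0 → a = b := by
    intro a ha b hb he
    rcases lt_trichotomy a b with h | h | h
    · exact absurd he (fun he2 => hcancel a b h hb he2)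
    · exact h
    · exact absurd he.symm (fun he2 => hcancel b a h ha he2)
  -- the forward orbit is everything
  have hsurj : ∀ v : V, ∃ k < p, f^[k] v0 = v := by
    set O := (Finset.range p).image (fun k => f^[k] v0) with hO
    have hmemO : ∀ a : ℕ, f^[a] v0 ∈ O := by
      intro a
      rw [hmod a, hO, Finset.mem_image]
      exact ⟨a % p, Finset.mem_range.mpr (Nat.mod_lt a (by omega)), rfl⟩
    have hOuniv : ∀ z : V, z ∈ O := by
      intro z
      by_contra hz
      -- z beats everything in O
      have hbeats : ∀ u ∈ O, r z u := by
        intro u hu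
        have hne : z ≠ u := fun he => hz (he ▸ hu)
        refine total htour hne (fun h => hz ?_)
        obtain ⟨k, hk1, hkd, hkz⟩ := (out_iff_iterate htour hloc u z).mp h
        rw [hO, Finset.mem_image] at hu
        obtain ⟨j, hj, hju⟩ := hu
        rw [← hkz, ← hju, ← Function.iterate_add_apply]
        exact hmemO (k + j)
      have hv0 : v0 ∈ O := hmemO 0
      have : r z v0 := hbeats v0 hv0
      obtain ⟨k, hk1, hkd, hkv⟩ := (out_iff_iterate htour hloc z v0).mp this
      obtain ⟨m, hm1, hmz⟩ := exists_period htour hloc z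
      have : f^[m * k - k] v0 = z := by
        rw [← hkv, ← Function.iterate_add_apply]
        have hkm : k ≤ m * k := Nat.le_mul_of_pos_left k (by omega)
        have h2 : m * k - k + k = m * k := by omega
        rw [h2, Function.iterate_mul, Function.iterate_fixed hmz]
      exact hz (this ▸ hmemO (m * k - k))
    intro v
    have := hOuniv v
    rw [hO, Finset.mem_image] at this
    obtain ⟨k, hk, hkv⟩ := this
    exact ⟨k, Finset.mem_range.mp hk, hkv⟩
  -- p = N
  have hbij : Function.Bijective (fun k : Fin p => f^[k.1] v0) := by
    constructor
    · intro a b he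
      exact Fin.ext (hinjlt a.1 a.2 b.1 b.2 he)
    · intro v
      obtain ⟨k, hk, hkv⟩ := hsurj v
      exact ⟨⟨k, hk⟩, hkv⟩
  have hpN : p = N := by
    have := Fintype.card_of_bijective hbij
    rw [Fintype.card_fin] at this
    rw [← hN, Nat.card_eq_fintype_card, ← this]
  -- the bijection ψ : ZMod N → V
  set ψ : ZMod N → V := fun k => f^[k.val] v0 with hψ
  have hψbij : Function.Bijective ψ := by
    constructor
    · intro a b he
      have hv := hinjlt a.val (by rw [hpN]; exact ZMod.val_lt a) b.val
        (by rw [hpN]; exact ZMod.val_lt b) he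
      have hvalinj : Function.Injective (ZMod.val : ZMod N → ℕ) := by
        intro c d h
        rw [← ZMod.natCast_rightInverse c, ← ZMod.natCast_rightInverse d, h]
      exact hvalinj hv
    · intro v
      obtain ⟨k, hk, hkv⟩ := hsurj v
      refine ⟨(k : ZMod N), ?_⟩
      rw [hψ]
      simp only
      rw [ZMod.val_cast_of_lt (hpN ▸ hk), hkv]
  refine ⟨(Equiv.ofBijective ψ hψbij).symm, ?_⟩
  set φ := (Equiv.ofBijective ψ hψbij).symm with hφ
  have hφψ : ∀ v : V, f^[(φ v).val] v0 = v := by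
    intro v
    have : ψ (φ v) = v := by
      rw [hφ]
      exact (Equiv.ofBijective ψ hψbij).apply_symm_apply v
    exact this
  intro u w hwu
  set i := (φ u).val with hi
  set j := (φ w).val with hj
  set k := (φ w - φ u).val with hk
  have hkN : k < N := ZMod.val_lt _
  have hiN : i < N := ZMod.val_lt _
  have hjN : j < N := ZMod.val_lt _
  have hk1 : 1 ≤ k := by
    rcases Nat.eq_zero_or_pos k with h0 | h1
    · exfalso
      have : φ w - φ u = 0 := (ZMod.val_eq_zero _).mp h0
      have : φ w = φ u := by
        have := sub_eq_zero.mp this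
        exact this
      exact hwu (φ.injective this)
    · exact h1
  -- w = f^[k] u
  have hwk : f^[k] u = w := by
    have hcast : ((k + i : ℕ) : ZMod N) = ((j : ℕ) : ZMod N) := by
      push_cast
      rw [hk, hi, hj, ZMod.natCast_val, ZMod.natCast_val, ZMod.natCast_val]
      simp only [ZMod.cast_id]
      ring
    have hmodeq : (k + i) % N = j % N := by
      have := (ZMod.natCast_eq_natCast_iff _ _ _).mp hcast
      exact this
    rw [← hφψ u, ← Function.iterate_add_apply, hmod (k + i), hpN, hmodeq,
      Nat.mod_eq_of_lt hjN]
    exact hφψ w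
  -- out-degree
  have hcardeq : Nat.card {x : V // r u x} = (outS r u).card := by
    rw [Nat.card_eq_fintype_card, Fintype.card_subtype]
    rfl
  rw [hcardeq]
  have hdlt : (outS r u).card < N := by
    have hsub : outS r u ⊆ Finset.univ.erase u := by
      intro z hz
      rw [Finset.mem_erase]
      refine ⟨fun he => ?_, Finset.mem_univ z⟩
      have h2 := mem_outS.mp hz
      rw [he] at h2
      exact htour.1 u h2
    have := Finset.card_le_card hsub
    rw [Finset.card_erase_of_mem (Finset.mem_univ u)] at this
    have hcv : Fintype.card V = N := by rw [← Nat.card_eq_fintype_card, hN]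
    rw [Finset.card_univ, hcv] at this
    omega
  constructor
  · intro h
    obtain ⟨k', hk'1, hk'd, hk'w⟩ := (out_iff_iterate htour hloc u w).mp h
    -- k' = k
    have hk'N : k' < N := by omega
    have he2 : f^[k' + i] v0 = f^[k + i] v0 := by
      rw [Function.iterate_add_apply, Function.iterate_add_apply, hφψ u, hk'w, hwk]
    have hmm : (k' + i) % p = (k + i) % p := by
      apply hinjlt _ (Nat.mod_lt _ (by omega)) _ (Nat.mod_lt _ (by omega))
      rw [← hmod, ← hmod, he2]
    rw [hpN] at hmm
    have hmeq : k' ≡ k [MOD N] := Nat.ModEq.add_right_cancel' i hmm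
    have h3 : k' % N = k % N := hmeq
    rw [Nat.mod_eq_of_lt hk'N, Nat.mod_eq_of_lt hkN] at h3
    omega
  · intro h
    rw [← hwk]
    exact mem_outS.mp (iterate_mem htour hloc u k hk1 (by omega) ).1
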